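/- Let Ω ⊂ ℍ_s^n be self-stem-preserving and let f : Ω → ℍ be path-slice. Then 𝒵(f) ⊂ 𝒵(f^s_Ω), i.e. for every q ∈ Ω with f(q) = 0 one has f^s_Ω(q) = 0, where f^s_Ω is the symmetrization of f on Ω and 𝒵(h) := {q : h(q) = 0}. -/

import Mathlib

open scoped Quaternion
open Classical

attribute [local instance] Classical.propDecidable

noncomputable section

/-- Continuous-path carrier type: maps from `[0,1]` to `ℂⁿ`. -/
abbrev PathC (n : ℕ) := unitInterval → (Fin n → ℂ)

/-- The sphere of quaternionic imaginary units `𝕊 = {I : I² = -1}`. -/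
def SQ : Set ℍ[ℝ] := {I | I ^ 2 = -1}

/-- A quaternion is real if it is the image of a real number. -/
def IsRealQ (p : ℍ[ℝ]) : Prop := ∃ r : ℝ, p = (r : ℍ[ℝ])

/-- `Ψ_i^I : ℂⁿ → ℂ_Iⁿ`, componentwise `x + y i ↦ x + y I`. -/
def psi {n : ℕ} (I : ℍ[ℝ]) (z : Fin n → ℂ) : Fin n → ℍ[ℝ] :=
  fun k => ((z k).re : ℍ[ℝ]) + (z k).im • I

/-- The slice `ℂ_I = {x + y I}` as a subset of the quaternions. -/
def CI (I : ℍ[ℝ]) : Set ℍ[ℝ] := {p | ∃ x y : ℝ, p = (x : ℍ[ℝ]) + y • I}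

/-- The weakly slice cone `ℍ_sⁿ = ⋃_{I ∈ 𝕊} ℂ_Iⁿ`. -/
def HSliceCone (n : ℕ) : Set (Fin n → ℍ[ℝ]) := ⋃ I ∈ SQ, Set.range (psi (n := n) I)

/-- Membership in `𝒫(ℂⁿ)`: continuous with real initial point. -/
def IsPathP {n : ℕ} (γ : PathC n) : Prop :=
  Continuous γ ∧ ∀ k, ((γ 0) k).im = 0

/-- `γ^I ⊂ Ω`. -/
def pathInSlice {n : ℕ} (Ω : Set (Fin n → ℍ[ℝ])) (I : ℍ[ℝ]) (γ : PathC n) : Prop :=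
  ∀ t, psi I (γ t) ∈ Ω

/-- `𝕊(Ω, γ) = {I ∈ 𝕊 : γ^I ⊂ Ω}`. -/
def SGamma {n : ℕ} (Ω : Set (Fin n → ℍ[ℝ])) (γ : PathC n) : Set ℍ[ℝ] :=
  {I | I ∈ SQ ∧ pathInSlice Ω I γ}

/-- `γ ∈ 𝒫(ℂⁿ, Ω)`. -/
def PathIn {n : ℕ} (Ω : Set (Fin n → ℍ[ℝ])) (γ : PathC n) : Prop :=
  IsPathP γ ∧ ∃ I, I ∈ SGamma Ω γ

/-- `F` is a path-slice stem function of `f` on `Ω`. -/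
def IsStem {n : ℕ} (Ω : Set (Fin n → ℍ[ℝ])) (f : (Fin n → ℍ[ℝ]) → ℍ[ℝ])
    (F : PathC n → ℍ[ℝ] × ℍ[ℝ]) : Prop :=
  ∀ γ, PathIn Ω γ → ∀ I ∈ SGamma Ω γ, f (psi I (γ 1)) = (F γ).1 + I * (F γ).2

/-- `f` is a path-slice function on `Ω`. -/
def PathSlice {n : ℕ} (Ω : Set (Fin n → ℍ[ℝ])) (f : (Fin n → ℍ[ℝ]) → ℍ[ℝ]) : Prop :=
  ∃ F, IsStem Ω f F

/-- `Ω` is real-path-connected. -/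
def RealPathConnected {n : ℕ} (Ω : Set (Fin n → ℍ[ℝ])) : Prop :=
  ∀ q ∈ Ω, ∃ γ : PathC n, PathIn Ω γ ∧ ∃ I ∈ SGamma Ω γ, psi I (γ 1) = q

/-- `Ω₂` is `Ω₁`-stem-preserving. -/
def StemPreserving {n : ℕ} (Ω₁ Ω₂ : Set (Fin n → ℍ[ℝ])) : Prop :=
  (∀ γ : PathC n, PathIn Ω₁ γ → (SGamma Ω₂ γ).Nontrivial) ∧
  (∀ α β : PathC n, PathIn Ω₁ α → PathIn Ω₁ β → α 1 = β 1 →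
    ¬ ∃ I, SGamma Ω₂ α ∩ SGamma Ω₂ β = {I})

/-- `Ω` is self-stem-preserving. -/
def SelfStemPreserving {n : ℕ} (Ω : Set (Fin n → ℍ[ℝ])) : Prop :=
  RealPathConnected Ω ∧ StemPreserving Ω Ω

/-- The map `𝕴 : ℍ_sⁿ → 𝕊 ∪ {0}`. -/
def frakI {n : ℕ} (q : Fin n → ℍ[ℝ]) : ℍ[ℝ] :=
  if h : ∀ k, IsRealQ (q k) then 0
  else
    let k := (Finset.univ.filter fun k => ¬ IsRealQ (q k)).min' (by
      push_neg at h
      obtain ⟨k, hk⟩ := h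
      exact ⟨k, Finset.mem_filter.mpr ⟨Finset.mem_univ k, hk⟩⟩)
    ‖q k - ((q k).re : ℍ[ℝ])‖⁻¹ • (q k - ((q k).re : ℍ[ℝ]))

/-- A choice of path-slice stem function of `f` (on paths in `Ω`); by
the results of Dou–Jin–Ren–Yang its restriction to `𝒫(ℂⁿ, Ω₁)` is the canonical `F^f_{Ω₁}`. -/
def stemOf {n : ℕ} (Ω : Set (Fin n → ℍ[ℝ])) (f : (Fin n → ℍ[ℝ]) → ℍ[ℝ]) :
    PathC n → ℍ[ℝ] × ℍ[ℝ] :=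
  Classical.epsilon (IsStem Ω f)

/-- The function `ℱ^f_{Ω₁} : Ω₁ → ℍ²` induced by the stem of `f` (path-slice on `Ω₂`). -/
def scrF {n : ℕ} (Ω₁ Ω₂ : Set (Fin n → ℍ[ℝ])) (f : (Fin n → ℍ[ℝ]) → ℍ[ℝ])
    (q : Fin n → ℍ[ℝ]) : ℍ[ℝ] × ℍ[ℝ] :=
  if ∀ k, IsRealQ (q k) then (f q, 0)
  else stemOf Ω₂ f (Classical.epsilon (fun γ : PathC n =>
    PathIn Ω₁ γ ∧ pathInSlice Ω₁ (frakI q) γ ∧ psi (frakI q) (γ 1) = q))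

/-- The `Ω₁`-slice conjugation `f^c_{Ω₁}`. -/
def sliceConj {n : ℕ} (Ω₁ Ω₂ : Set (Fin n → ℍ[ℝ])) (f : (Fin n → ℍ[ℝ]) → ℍ[ℝ]) :
    (Fin n → ℍ[ℝ]) → ℍ[ℝ] :=
  fun q => star (scrF Ω₁ Ω₂ f q).1 + frakI q * star (scrF Ω₁ Ω₂ f q).2

/-- The `*`-product `g * f` of a path-slice `g : Ω₁ → ℍ` with `f : Ω₂ → ℍ`. -/
def starProdF {n : ℕ} (Ω₁ Ω₂ : Set (Fin n → ℍ[ℝ])) (g f : (Fin n → ℍ[ℝ]) → ℍ[ℝ]) :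
    (Fin n → ℍ[ℝ]) → ℍ[ℝ] :=
  fun q => g q * (scrF Ω₁ Ω₂ f q).1 + frakI q * g q * (scrF Ω₁ Ω₂ f q).2

/-- The symmetrization `f^s_{Ω₁} = f^c_{Ω₁} * f`. -/
def symmF {n : ℕ} (Ω₁ Ω₂ : Set (Fin n → ℍ[ℝ])) (f : (Fin n → ℍ[ℝ]) → ℍ[ℝ]) :
    (Fin n → ℍ[ℝ]) → ℍ[ℝ] :=
  starProdF Ω₁ Ω₂ (sliceConj Ω₁ Ω₂ f) f

/-- The pointwise `*`-product on `ℍ²`. -/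
def starPair (p q : ℍ[ℝ] × ℍ[ℝ]) : ℍ[ℝ] × ℍ[ℝ] :=
  (p.1 * q.1 - p.2 * q.2, p.2 * q.1 + p.1 * q.2)

/-- Slice-open sets: every slice is open (pulled back to `ℂⁿ` via `Ψ_i^I`). -/
def SliceOpen {n : ℕ} (U : Set (Fin n → ℍ[ℝ])) : Prop :=
  ∀ I ∈ SQ, IsOpen {z : Fin n → ℂ | psi I z ∈ U}

/-- Weakly slice regular functions: each slice restriction is left `I`-holomorphic. -/
def SliceRegular {n : ℕ} (Ω : Set (Fin n → ℍ[ℝ])) (f : (Fin n → ℍ[ℝ]) → ℍ[ℝ]) : Prop :=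
  ∀ I ∈ SQ, ∀ z : Fin n → ℂ, psi I z ∈ Ω →
    DifferentiableWithinAt ℝ (fun w => f (psi I w)) {w | psi I w ∈ Ω} z ∧
    ∀ ℓ : Fin n,
      fderivWithin ℝ (fun w => f (psi I w)) {w | psi I w ∈ Ω} z (Pi.single ℓ 1)
        + I * fderivWithin ℝ (fun w => f (psi I w)) {w | psi I w ∈ Ω} z (Pi.single ℓ Complex.I)
        = 0

/-- The ball `B_I(q, r)` inside the slice `ℂ_Iⁿ`. -/
def BI {n : ℕ} (I : ℍ[ℝ]) (q : Fin n → ℍ[ℝ]) (r : ℝ) : Set (Fin n → ℍ[ℝ]) :=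
  {p | p ∈ Set.range (psi (n := n) I) ∧ dist p q < r}

/-- The slice topology. -/
def sliceTop (n : ℕ) : TopologicalSpace (Fin n → ℍ[ℝ]) where
  IsOpen := SliceOpen
  isOpen_univ := by intro I _; simpa using isOpen_univ
  isOpen_inter := by
    intro s t hs ht I hI
    have h : {z : Fin n → ℂ | psi I z ∈ s ∩ t}
        = {z : Fin n → ℂ | psi I z ∈ s} ∩ {z : Fin n → ℂ | psi I z ∈ t} := by
      ext z; simp [Set.mem_inter_iff]
    rw [h]
    exact (hs I hI).inter (ht I hI)
  isOpen_sUnion := by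
    intro S hS I hI
    have h : {z : Fin n → ℂ | psi I z ∈ ⋃₀ S} = ⋃ s ∈ S, {z : Fin n → ℂ | psi I z ∈ s} := by
      ext z; simp
    rw [h]
    exact isOpen_biUnion fun s hs => hS s hs I hI

/-- Slice-domains: nonempty slice-open sets connected in the slice topology. -/
def SliceDomain {n : ℕ} (Ω : Set (Fin n → ℍ[ℝ])) : Prop :=
  SliceOpen Ω ∧ @IsConnected _ (sliceTop n) Ω

/-- Concatenation `γ · ℒ_{γ(1)}^z` of a path with the segment from `γ(1)` to `z`. -/
def concatSeg {n : ℕ} (γ : PathC n) (z : Fin n → ℂ) : PathC n := fun t =>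
  if h : (t : ℝ) ≤ 1 / 2 then
    γ ⟨2 * (t : ℝ), ⟨by linarith [t.2.1], by linarith⟩⟩
  else
    (1 - (2 * (t : ℝ) - 1)) • γ 1 + (2 * (t : ℝ) - 1) • z

/-- The action of `σ` on `ℍ²`: `σ(p₁, p₂) = (-p₂, p₁)`. -/
def sigmaAct (p : ℍ[ℝ] × ℍ[ℝ]) : ℍ[ℝ] × ℍ[ℝ] := (-p.2, p.1)

/-- `F : 𝒫(ℂⁿ, Ω) → ℍ²` is holomorphic at the path `γ`. -/
def StemHoloAt {n : ℕ} (Ω : Set (Fin n → ℍ[ℝ])) (F : PathC n → ℍ[ℝ] × ℍ[ℝ])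
    (γ : PathC n) : Prop :=
  ∃ r > 0, (∀ z ∈ Metric.ball (γ 1) r, PathIn Ω (concatSeg γ z)) ∧
    ∀ z ∈ Metric.ball (γ 1) r,
      DifferentiableAt ℝ (fun w => F (concatSeg γ w)) z ∧
      ∀ ℓ : Fin n,
        fderiv ℝ (fun w => F (concatSeg γ w)) z (Pi.single ℓ 1)
          + sigmaAct (fderiv ℝ (fun w => F (concatSeg γ w)) z (Pi.single ℓ Complex.I)) = 0

/-- `F` is holomorphic (at every path of `𝒫(ℂⁿ, Ω)`). -/
def StemHolo {n : ℕ} (Ω : Set (Fin n → ℍ[ℝ])) (F : PathC n → ℍ[ℝ] × ℍ[ℝ]) : Prop :=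
  ∀ γ, PathIn Ω γ → StemHoloAt Ω F γ

/-- `E` is a complex-analytic subset of the open set `U ⊂ ℂⁿ`. -/
def IsComplexAnalyticSubset {n : ℕ} (U E : Set (Fin n → ℂ)) : Prop :=
  E ⊆ U ∧ ∀ z ∈ U, ∃ V, V ⊆ U ∧ IsOpen V ∧ z ∈ V ∧
    ∃ (m : ℕ) (h : Fin m → (Fin n → ℂ) → ℂ),
      (∀ j, DifferentiableOn ℂ (h j) V) ∧ E ∩ V = {w | w ∈ V ∧ ∀ j, h j w = 0}

/-- `A` is a path-slice analytic subset of the slice-domain `Ω`. -/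
def PathSliceAnalytic {n : ℕ} (Ω A : Set (Fin n → ℍ[ℝ])) : Prop :=
  A = Ω ∨ ∀ γ : PathC n, PathIn Ω γ →
    ∃ r > 0, ∃ rI : ℍ[ℝ] → ℝ, (∀ I ∈ SGamma Ω γ, rI I ∈ Set.Ioc (0 : ℝ) r) ∧
      ∃ E : Set (Fin n → ℂ), IsComplexAnalyticSubset (Metric.ball (γ 1) r) E ∧
        E ≠ Metric.ball (γ 1) r ∧
        ∀ I ∈ SGamma Ω γ, A ∩ BI I (psi I (γ 1)) (rI I) ⊆ psi I '' E



lemma sq_re_zero' (I : ℍ[ℝ]) (h : I ^ 2 = -1) : I.re = 0 := by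
  rw [pow_two, Quaternion.ext_iff] at h
  simp [Quaternion.re_mul, Quaternion.imI_mul, Quaternion.imJ_mul, Quaternion.imK_mul] at h
  obtain ⟨h1, h2, h3, h4⟩ := h
  nlinarith [sq_nonneg I.re, sq_nonneg (I.re*I.imI), sq_nonneg (I.re*I.imJ),
    sq_nonneg (I.re*I.imK), sq_nonneg I.imI, sq_nonneg I.imJ, sq_nonneg I.imK]

lemma star_eq_neg_of_re_zero' (I : ℍ[ℝ]) (h : I.re = 0) : star I = -I := by
  ext <;> simp [h]

lemma norm_one_of_sq' (I : ℍ[ℝ]) (h : I ^ 2 = -1) : ‖I‖ = 1 := by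
  have hs := star_eq_neg_of_re_zero' I (sq_re_zero' I h)
  have key : I * star I = 1 := by
    rw [hs, pow_two] at *
    simp [mul_neg, h]
  have h2 : ‖I‖ * ‖I‖ = 1 := by
    have := congrArg norm key
    rwa [norm_mul, norm_star, norm_one] at this
  nlinarith [norm_nonneg I]

lemma key_alg' (J A B : ℍ[ℝ]) (h : J * J = -1) :
    (A*J + J*A) * (-(J*B)) + J*(A*J + J*A)*B = 0 := by
  have e : (A*J + J*A) * (-(J*B)) + J*(A*J + J*A)*B
      = -(A*((J*J)*B)) + (J*J)*(A*B) := by noncomm_ring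
  rw [e, h]; noncomm_ring

/-- zeros of a path-slice function are zeros of its symmetrization. -/
theorem zero_subset_symm_zero {n : ℕ} (Ω : Set (Fin n → ℍ[ℝ])) (hΩ : Ω ⊆ HSliceCone n)
    (hssp : SelfStemPreserving Ω) (f : (Fin n → ℍ[ℝ]) → ℍ[ℝ]) (hf : PathSlice Ω f) :
    ∀ q ∈ Ω, f q = 0 → symmF Ω Ω f q = 0 := by
  obtain ⟨hrpc, hsp⟩ := hssp
  intro q hq hq0
  have hstem : IsStem Ω f (stemOf Ω f) := Classical.epsilon_spec hf
  by_cases hreal : ∀ k, IsRealQ (q k)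
  · have hJ0 : frakI q = 0 := by unfold frakI; rw [dif_pos hreal]
    simp only [symmF, starProdF, sliceConj, hJ0]
    simp only [scrF, if_pos hreal]
    simp [hq0]
  · obtain ⟨γ, hγ, I, hI, hIq⟩ := hrpc q hq
    have hISQ : I ^ 2 = -1 := hI.1
    have hIslice : pathInSlice Ω I γ := hI.2
    have hIre : I.re = 0 := sq_re_zero' I hISQ
    have hInorm : ‖I‖ = 1 := norm_one_of_sq' I hISQ
    have hcomp : ∀ k, q k = (((γ 1) k).re : ℍ[ℝ]) + ((γ 1) k).im • I := by
      intro k; rw [← hIq]; rfl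
    have key : ∀ k, ¬ IsRealQ (q k) →
        ‖q k - ((q k).re : ℍ[ℝ])‖⁻¹ • (q k - ((q k).re : ℍ[ℝ])) = I ∨
        ‖q k - ((q k).re : ℍ[ℝ])‖⁻¹ • (q k - ((q k).re : ℍ[ℝ])) = -I := by
      intro k hk
      set x := ((γ 1) k).re with hx
      set y := ((γ 1) k).im with hy
      have hqk : q k = (x : ℍ[ℝ]) + y • I := hcomp k
      have hre : (q k).re = x := by rw [hqk]; simp [hIre]
      have hu : q k - ((q k).re : ℍ[ℝ]) = y • I := by
        rw [hre, hqk, add_sub_cancel_left]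
      have hyne : y ≠ 0 := by
        intro h0
        exact hk ⟨x, by rw [hqk, h0]; simp⟩
      rw [hu, norm_smul, hInorm, mul_one, Real.norm_eq_abs]
      rcases lt_or_gt_of_ne hyne with h | h
      · right
        rw [smul_smul, abs_of_neg h, inv_neg, neg_mul, inv_mul_cancel₀ h.ne]
        simp
      · left
        rw [smul_smul, abs_of_pos h, inv_mul_cancel₀ h.ne', one_smul]
    have hne : (Finset.univ.filter fun k => ¬ IsRealQ (q k)).Nonempty := by
      obtain ⟨k, hk⟩ := not_forall.mp hreal
      exact ⟨k, Finset.mem_filter.mpr ⟨Finset.mem_univ k, hk⟩⟩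
    have hk0 : ¬ IsRealQ (q ((Finset.univ.filter fun k => ¬ IsRealQ (q k)).min' hne)) :=
      (Finset.mem_filter.mp (Finset.min'_mem _ hne)).2
    have hJcases : frakI q = I ∨ frakI q = -I := by
      unfold frakI
      rw [dif_neg hreal]
      exact key _ hk0
    have hJSQ : frakI q ^ 2 = -1 := by
      rcases hJcases with h | h <;> rw [h]
      · exact hISQ
      · rw [neg_sq]; exact hISQ
    have hJre : (frakI q).re = 0 := sq_re_zero' _ hJSQ
    have hJstar : star (frakI q) = -(frakI q) := star_eq_neg_of_re_zero' _ hJre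
    have hJJ : frakI q * frakI q = -1 := by rw [← pow_two]; exact hJSQ
    have hP : ∃ δ : PathC n, PathIn Ω δ ∧ pathInSlice Ω (frakI q) δ ∧ psi (frakI q) (δ 1) = q := by
      rcases hJcases with h | h
      · exact ⟨γ, hγ, by rw [h]; exact hIslice, by rw [h]; exact hIq⟩
      · refine ⟨fun t k => (starRingEnd ℂ) (γ t k), ?_, ?_, ?_⟩
        · refine ⟨⟨?_, ?_⟩, ⟨-I, ?_, ?_⟩⟩
          · exact continuous_pi fun k => continuous_star.comp ((continuous_apply k).comp hγ.1.1)
          · intro k; simp [hγ.1.2 k]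
          · show (-I) ^ 2 = -1
            rw [neg_sq]; exact hISQ
          · intro t
            have hpsi : psi (-I) (fun k => (starRingEnd ℂ) (γ t k)) = psi I (γ t) := by
              funext k; simp [psi]
            rw [hpsi]; exact hIslice t
        · rw [h]
          intro t
          have hpsi : psi (-I) (fun k => (starRingEnd ℂ) (γ t k)) = psi I (γ t) := by
            funext k; simp [psi]
          rw [hpsi]; exact hIslice t
        · rw [h]
          have hpsi : psi (-I) (fun k => (starRingEnd ℂ) (γ 1 k)) = psi I (γ 1) := by
            funext k; simp [psi]
          rw [hpsi]; exact hIq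
    obtain ⟨hδPath, hδslice, hδend⟩ := Classical.epsilon_spec hP
    set δ := Classical.epsilon (fun γ : PathC n =>
      PathIn Ω γ ∧ pathInSlice Ω (frakI q) γ ∧ psi (frakI q) (γ 1) = q) with hδdef
    have hscr : scrF Ω Ω f q = stemOf Ω f δ := by
      simp only [scrF, if_neg hreal]; rfl
    have hfq : f q = (stemOf Ω f δ).1 + frakI q * (stemOf Ω f δ).2 := by
      have := hstem δ hδPath (frakI q) ⟨hJSQ, hδslice⟩
      rwa [hδend] at this
    have hF1 : (stemOf Ω f δ).1 = -(frakI q * (stemOf Ω f δ).2) := by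
      have h0 : (stemOf Ω f δ).1 + frakI q * (stemOf Ω f δ).2 = 0 := by
        rw [← hfq, hq0]
      exact eq_neg_of_add_eq_zero_left h0
    simp only [symmF, starProdF, sliceConj, hscr]
    rw [hF1]
    have hstar1 : star (-(frakI q * (stemOf Ω f δ).2)) = star (stemOf Ω f δ).2 * frakI q := by
      rw [star_neg, star_mul, hJstar, mul_neg, neg_neg]
    rw [hstar1]
    exact key_alg' (frakI q) (star (stemOf Ω f δ).2) (stemOf Ω f δ).2 hJJ


end
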